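/- Let f(X) = a_0 + a_1 X + ... + a_n X^n be a polynomial with integer coefficients of degree n ≥ 2 such that every partial sum a_n + a_{n−1} + ... + a_{n−j}, for 0 ≤ j ≤ n, is non-negative. If for some integer m > 1 + 1/sin(π/n) one has f(m) = p^k with p a prime number and k a positive integer, and p does not divide f'(m), then f is irreducible over ℚ. -/

import Mathlib

/-- The open sector with vertex `v` on the real axis and half-angle `θ`:
complex numbers `z ≠ v` with `|arg (z - v)| < θ`. -/
def sector (v θ : ℝ) : Set ℂ :=
  {z : ℂ | z ≠ (v : ℂ) ∧ |Complex.arg (z - (v : ℂ))| < θ}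

/-- The open upper half-sector: `z = v + ρ e^{iφ}` with `ρ > 0`, `0 < φ < θ`. -/
def sectorPlus (v θ : ℝ) : Set ℂ :=
  {z : ℂ | 0 < Complex.arg (z - (v : ℂ)) ∧ Complex.arg (z - (v : ℂ)) < θ}

/-- The open lower half-sector: `z = v + ρ e^{iφ}` with `ρ > 0`, `-θ < φ < 0`. -/
def sectorMinus (v θ : ℝ) : Set ℂ :=
  {z : ℂ | -θ < Complex.arg (z - (v : ℂ)) ∧ Complex.arg (z - (v : ℂ)) < 0}

open Polynomial Complex Finset Real


lemma abel_key {R : Type*} [CommRing R] (a : ℕ → R) (z : R) :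
    ∀ n : ℕ, ∑ j ∈ range (n+1), a j * z^(n-j)
      = (z - 1) * ∑ j ∈ range n, (∑ i ∈ range (j+1), a i) * z^(n-1-j)
        + ∑ i ∈ range (n+1), a i := by
  intro n
  induction n with
  | zero => simp
  | succ n ih =>
    have e1 : ∑ j ∈ range (n+2), a j * z^(n+1-j)
        = z * (∑ j ∈ range (n+1), a j * z^(n-j)) + a (n+1) := by
      rw [sum_range_succ (fun j => a j * z^(n+1-j)) (n+1), Finset.mul_sum]
      simp only [Nat.sub_self, pow_zero, mul_one]
      congr 1
      exact sum_congr rfl fun j hj => by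
        have hj' : j ≤ n := Nat.lt_succ_iff.mp (mem_range.mp hj)
        have h : n + 1 - j = (n - j) + 1 := by omega
        rw [h, pow_succ]; ring
    have e2 : ∑ j ∈ range (n+1), (∑ i ∈ range (j+1), a i) * z^(n+1-1-j)
        = z * (∑ j ∈ range n, (∑ i ∈ range (j+1), a i) * z^(n-1-j))
          + (∑ i ∈ range (n+1), a i) := by
      rw [sum_range_succ (fun j => (∑ i ∈ range (j+1), a i) * z^(n+1-1-j)) n, Finset.mul_sum]
      congr 1
      · exact sum_congr rfl fun j hj => by
          have hj' : j < n := mem_range.mp hj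
          have h : n + 1 - 1 - j = (n - 1 - j) + 1 := by omega
          rw [h, pow_succ]; ring
      · simp
    rw [e1, ih, e2, sum_range_succ a (n+1)]
    ring

lemma arg_one_add (w : ℂ) (hφ : 0 < w.arg) (hlt : w.arg < Real.pi/2) :
    0 < (1+w).arg ∧ (1+w).arg < w.arg := by
  have hw0 : w ≠ 0 := by rintro rfl; simp [Complex.arg_zero] at hφ
  have hre : 0 < w.re := by
    rcases Complex.abs_arg_lt_pi_div_two_iff.mp (by rw [abs_of_pos hφ]; exact hlt) with h | h
    · exact h
    · exact absurd h hw0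
  have him : 0 < w.im := by
    rcases lt_or_eq_of_le (Complex.arg_nonneg_iff.mp hφ.le) with h | h
    · exact h
    · exact absurd (Complex.arg_eq_zero_iff.mpr ⟨hre.le, h.symm⟩) (ne_of_gt hφ)
  have h1re : (0:ℝ) < (1+w).re := by simp; linarith
  have h1w0 : (1:ℂ) + w ≠ 0 := fun h => by simp [h] at h1re
  have habsw : 0 < ‖w‖ := norm_pos_iff.mpr hw0
  have habs1w : 0 < ‖1+w‖ := norm_pos_iff.mpr h1w0
  have hargw : w.arg = Real.arcsin (w.im / ‖w‖) := by
    rw [Complex.arg, if_pos hre.le]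
  have harg1 : (1+w).arg = Real.arcsin ((1+w).im / ‖1+w‖) := by
    rw [Complex.arg, if_pos h1re.le]
  have him1 : (1+w).im = w.im := by simp
  have habslt : ‖w‖ < ‖1+w‖ := by
    rw [Complex.norm_def, Complex.norm_def]
    apply Real.sqrt_lt_sqrt (Complex.normSq_nonneg _)
    simp [Complex.normSq_apply]
    nlinarith
  constructor
  · rw [harg1, him1]
    exact Real.arcsin_pos.mpr (div_pos him habs1w)
  · rw [harg1, hargw, him1]
    have hdiv : w.im / ‖1+w‖ < w.im / ‖w‖ :=
      div_lt_div_of_pos_left him habsw habslt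
    apply Real.strictMonoOn_arcsin ?_ ?_ hdiv
    · constructor
      · calc (-1:ℝ) ≤ 0 := by norm_num
          _ ≤ _ := (div_pos him habs1w).le
      · calc w.im / ‖1+w‖ = (1+w).im / ‖1+w‖ := by rw [him1]
          _ ≤ 1 := (abs_le.mp (Complex.abs_im_div_norm_le_one _)).2
    · exact ⟨(abs_le.mp (Complex.abs_im_div_norm_le_one w)).1,
        (abs_le.mp (Complex.abs_im_div_norm_le_one w)).2⟩

lemma term_im_pos (w : ℂ) (hφ : 0 < w.arg) (hψ0 : 0 < (1+w).arg)
    (r : ℕ) (hbound : w.arg + r * (1+w).arg < Real.pi) : 0 < (w * (1+w)^r).im := by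
  have hw0 : w ≠ 0 := by rintro rfl; simp [Complex.arg_zero] at hφ
  have h1w0 : (1:ℂ) + w ≠ 0 := by
    intro h; rw [h] at hψ0; simp [Complex.arg_zero] at hψ0
  set A := ‖w‖ with hA
  set B := ‖1+w‖ with hB
  set φ := w.arg with hφdef
  set ψ := (1+w).arg with hψdef
  have hA0 : 0 < A := norm_pos_iff.mpr hw0
  have hB0 : 0 < B := norm_pos_iff.mpr h1w0
  have hw' : (↑A : ℂ) * Complex.exp (↑φ * Complex.I) = w := Complex.norm_mul_exp_arg_mul_I w
  have h1w' : (↑B : ℂ) * Complex.exp (↑ψ * Complex.I) = 1 + w := Complex.norm_mul_exp_arg_mul_I (1+w)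
  have key : w * (1+w)^r = ((A * B^r : ℝ) : ℂ) * Complex.exp (((φ + r * ψ : ℝ)) * Complex.I) := by
    conv_lhs => rw [← h1w', ← hw']
    rw [mul_pow, ← Complex.exp_nat_mul]
    push_cast
    rw [add_mul, Complex.exp_add]
    ring
  rw [key]
  simp only [Complex.mul_im, Complex.ofReal_re, Complex.ofReal_im,
    Complex.exp_ofReal_mul_I_im, zero_mul, add_zero]
  apply mul_pos (mul_pos hA0 (pow_pos hB0 r))
  apply Real.sin_pos_of_pos_of_lt_pi
  · positivity
  · exact hbound

lemma sector_im_pos (n : ℕ) (hn : 2 ≤ n) (s : ℕ → ℝ) (hs : ∀ j ≤ n, 0 ≤ s j) (hs0 : 0 < s 0)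
    (z : ℂ) (hpos : 0 < (z-1).arg) (hlt : (z-1).arg < Real.pi/n) :
    0 < ((z - 1) * (∑ j ∈ range n, (s j : ℂ) * z^(n-1-j))).im := by
  set w := z - 1 with hw
  have hzw : z = 1 + w := by rw [hw]; ring
  have hn0 : (0:ℝ) < n := by positivity
  have hπ2 : Real.pi/n ≤ Real.pi/2 := by
    apply div_le_div_of_nonneg_left Real.pi_pos.le (by norm_num)
    exact_mod_cast hn
  have hlt2 : w.arg < Real.pi/2 := lt_of_lt_of_le hlt hπ2
  obtain ⟨hψ0, hψlt⟩ := arg_one_add w hpos hlt2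
  have hbound : ∀ j, j < n → w.arg + (n-1-j : ℕ) * (1+w).arg < Real.pi := by
    intro j hj
    have h1 : ((n-1-j : ℕ):ℝ) ≤ (n:ℝ) - 1 := by
      have h2 : (n-1-j : ℕ) ≤ n - 1 := by omega
      calc ((n-1-j : ℕ):ℝ) ≤ ((n-1 : ℕ):ℝ) := by exact_mod_cast h2
        _ = (n:ℝ) - 1 := by
          have : (1:ℕ) ≤ n := by omega
          push_cast [this]; ring
    have h3 : (n:ℝ) * (Real.pi/n) = Real.pi := by field_simp
    have h4 : ((n-1-j : ℕ):ℝ) * (1+w).arg ≤ ((n:ℝ) - 1) * (1+w).arg :=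
      mul_le_mul_of_nonneg_right h1 hψ0.le
    nlinarith [hψlt, hpos, hlt]
  have hexp : (z - 1) * (∑ j ∈ range n, (s j : ℂ) * z^(n-1-j))
      = ∑ j ∈ range n, (s j : ℂ) * (w * (1+w)^(n-1-j)) := by
    rw [Finset.mul_sum]
    exact sum_congr rfl fun j _ => by rw [hzw]; ring
  rw [hexp, Complex.im_sum]
  apply Finset.sum_pos'
  · intro j hj
    have hjn : j < n := mem_range.mp hj
    have him := term_im_pos w hpos hψ0 (n-1-j) (hbound j hjn)
    have : ((s j : ℂ) * (w * (1+w)^(n-1-j))).im = s j * (w * (1+w)^(n-1-j)).im := by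
      simp [Complex.mul_im]
    rw [this]
    exact mul_nonneg (hs j (by omega)) him.le
  · refine ⟨0, mem_range.mpr (by omega), ?_⟩
    have him := term_im_pos w hpos hψ0 (n-1-0) (hbound 0 (by omega))
    have : ((s 0 : ℂ) * (w * (1+w)^(n-1-0))).im = s 0 * (w * (1+w)^(n-1-0)).im := by
      simp [Complex.mul_im]
    rw [this]
    exact mul_pos hs0 him

lemma eval_identity (n : ℕ) (f : Polynomial ℤ) (hdeg : f.natDegree = n) (z : ℂ) :
    (f.map (Int.castRingHom ℂ)).eval z
      = (z - 1) * ∑ j ∈ range n, ((∑ i ∈ range (j+1), f.coeff (n-i) : ℤ) : ℂ) * z^(n-1-j)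
        + ((∑ i ∈ range (n+1), f.coeff (n-i) : ℤ) : ℂ) := by
  have hFdeg : (f.map (Int.castRingHom ℂ)).natDegree = n := by
    rw [Polynomial.natDegree_map_eq_of_injective Int.cast_injective f, hdeg]
  rw [Polynomial.eval_eq_sum_range, hFdeg]
  have hrefl := Finset.sum_range_reflect
    (fun i => ((f.coeff i : ℤ) : ℂ) * z^i) (n+1)
  simp only [Polynomial.coeff_map, eq_intCast] at *
  rw [← hrefl]
  simp only [Nat.add_sub_cancel]
  rw [abel_key (fun j => ((f.coeff (n-j) : ℤ) : ℂ)) z n]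
  push_cast
  ring

lemma no_upper_root (n : ℕ) (hn : 2 ≤ n) (f : Polynomial ℤ) (hdeg : f.natDegree = n)
    (hsum : ∀ j ≤ n, 0 ≤ ∑ i ∈ Finset.range (j + 1), f.coeff (n - i))
    (z : ℂ) (hz1 : z ≠ 1) (h0 : 0 ≤ (z-1).arg) (hlt : (z-1).arg < Real.pi/n) :
    (f.map (Int.castRingHom ℂ)).eval z ≠ 0 := by
  have hf0 : f ≠ 0 := by
    intro h; rw [h] at hdeg; simp at hdeg; omega
  have hs0 : 0 < f.coeff n := by
    rcases lt_or_eq_of_le (by simpa using hsum 0 (by omega)) with h | h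
    · exact h
    · exfalso
      apply hf0
      have : f.coeff n ≠ 0 := by
        rw [← hdeg]; exact Polynomial.leadingCoeff_ne_zero.mpr hf0
      exact absurd h.symm this
  set s : ℕ → ℝ := fun j => ((∑ i ∈ range (j+1), f.coeff (n-i) : ℤ) : ℝ) with hsdef
  have hsnn : ∀ j ≤ n, 0 ≤ s j := fun j hj => by
    simp only [hsdef]; exact_mod_cast hsum j hj
  have hs0' : 0 < s 0 := by
    have : s 0 = ((f.coeff n : ℤ) : ℝ) := by simp [hsdef]
    rw [this]; exact_mod_cast hs0
  have hid := eval_identity n f hdeg z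
  have hcast : ∀ j, ((∑ i ∈ range (j+1), f.coeff (n-i) : ℤ) : ℂ) = ((s j : ℝ) : ℂ) := by
    intro j; simp [hsdef]
  rcases lt_or_eq_of_le h0 with hpos | heq
  · -- strictly positive argument: imaginary part positive
    intro hzero
    have him := sector_im_pos n hn s hsnn hs0' z hpos hlt
    rw [hid] at hzero
    have him2 : ((z - 1) * ∑ j ∈ range n, ((∑ i ∈ range (j+1), f.coeff (n-i) : ℤ) : ℂ) * z^(n-1-j)
        + ((∑ i ∈ range (n+1), f.coeff (n-i) : ℤ) : ℂ)).im
        = ((z - 1) * (∑ j ∈ range n, (s j : ℂ) * z^(n-1-j))).im := by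
      simp only [hcast, Complex.add_im, Complex.intCast_im, Complex.ofReal_im, add_zero]
    rw [hzero, Complex.zero_im] at him2
    linarith
  · -- argument zero: z - 1 is a positive real
    have hreim := Complex.arg_eq_zero_iff.mp heq.symm
    have hw0 : z - 1 ≠ 0 := sub_ne_zero.mpr hz1
    have hcpos : 0 < (z-1).re := by
      rcases lt_or_eq_of_le hreim.1 with h | h
      · exact h
      · exfalso; exact hw0 (Complex.ext (by simp [h.symm]) (by simp [hreim.2]))
    set c : ℝ := (z-1).re with hc
    have hzc : z = ((1 + c : ℝ) : ℂ) := by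
      apply Complex.ext
      · simp [hc]
      · have : z.im = (z-1).im := by simp
        simp [this, hreim.2]
    set x : ℝ := 1 + c with hx
    have hx1 : 1 < x := by simp [hx]; linarith
    have hEpos : 0 < (x - 1) * ∑ j ∈ range n, s j * x^(n-1-j) + s n := by
      have hsumpos : 0 < ∑ j ∈ range n, s j * x^(n-1-j) := by
        apply Finset.sum_pos'
        · intro j hj
          exact mul_nonneg (hsnn j (by have := mem_range.mp hj; omega))
            (pow_nonneg (by linarith) _)
        · exact ⟨0, mem_range.mpr (by omega),
            mul_pos hs0' (pow_pos (by linarith) _)⟩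
      have := hsnn n le_rfl
      nlinarith
    intro hzero
    rw [hid, hzc] at hzero
    have h2 : (((x - 1) * ∑ j ∈ range n, s j * x^(n-1-j) + s n : ℝ) : ℂ) = 0 := by
      rw [← hzero]
      simp only [hcast]
      push_cast
      ring
    have h3 : ((x - 1) * ∑ j ∈ range n, s j * x^(n-1-j) + s n : ℝ) = 0 := by
      exact_mod_cast h2
    linarith

lemma no_sector_root (n : ℕ) (hn : 2 ≤ n) (f : Polynomial ℤ) (hdeg : f.natDegree = n)
    (hsum : ∀ j ≤ n, 0 ≤ ∑ i ∈ Finset.range (j + 1), f.coeff (n - i))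
    (z : ℂ) (hroot : (f.map (Int.castRingHom ℂ)).eval z = 0) (hz1 : z ≠ 1) :
    Real.pi/n ≤ |(z-1).arg| := by
  by_contra h
  push_neg at h
  rw [abs_lt] at h
  rcases le_or_gt 0 (z-1).arg with h0 | hneg
  · exact no_upper_root n hn f hdeg hsum z hz1 h0 h.2 hroot
  · set z' := (starRingEnd ℂ) z with hz'
    have hroot' : (f.map (Int.castRingHom ℂ)).eval z' = 0 := by
      have : (f.map (Int.castRingHom ℂ)).eval z' = (starRingEnd ℂ) ((f.map (Int.castRingHom ℂ)).eval z) := by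
        rw [Polynomial.eval_map, Polynomial.eval_map, Polynomial.hom_eval₂]
        congr 1
        exact RingHom.ext_int _ _
      rw [this, hroot, map_zero]
    have hz'1 : z' ≠ 1 := by
      intro hc
      apply hz1
      calc z = (starRingEnd ℂ) z' := by rw [hz']; exact (Complex.conj_conj z).symm
        _ = 1 := by rw [hc]; simp
    have hargconj : (z' - 1).arg = -(z - 1).arg := by
      have hsub : z' - 1 = (starRingEnd ℂ) (z - 1) := by
        simp [hz', map_sub]
      rw [hsub, Complex.arg_conj]
      rw [if_neg]
      intro hc
      rw [hc] at hneg
      exact absurd hneg (not_lt.mpr Real.pi_pos.le)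
    have h0' : 0 ≤ (z'-1).arg := by rw [hargconj]; linarith
    have hlt' : (z'-1).arg < Real.pi/n := by rw [hargconj]; linarith
    exact no_upper_root n hn f hdeg hsum z' hz'1 h0' hlt' hroot'

lemma root_dist (n : ℕ) (hn : 2 ≤ n) (m : ℝ) (hm : 1 + 1 / Real.sin (Real.pi / n) < m)
    (z : ℂ) (hcase : z = 1 ∨ Real.pi/n ≤ |(z-1).arg|) :
    1 < ‖(m:ℂ) - z‖ := by
  set α := Real.pi/n with hα
  have hα0 : 0 < α := by positivity
  have hα2 : α ≤ Real.pi/2 := by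
    rw [hα]
    apply div_le_div_of_nonneg_left Real.pi_pos.le (by norm_num)
    exact_mod_cast hn
  have hsin : 0 < Real.sin α :=
    Real.sin_pos_of_pos_of_lt_pi hα0 (lt_of_le_of_lt hα2 (by linarith [Real.pi_pos]))
  have hsin1 : Real.sin α ≤ 1 := Real.sin_le_one α
  have hcos0 : 0 ≤ Real.cos α := Real.cos_nonneg_of_mem_Icc ⟨by linarith, hα2⟩
  set c : ℝ := m - 1 with hc
  have hc1 : 1 / Real.sin α < c := by rw [hc]; linarith
  have hcpos : 0 < c := lt_trans (by positivity) hc1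
  have hcsin : 1 < c * Real.sin α := by
    rw [div_lt_iff₀ hsin] at hc1
    linarith
  rcases hcase with rfl | harg
  · have : (m:ℂ) - 1 = ((c : ℝ) : ℂ) := by rw [hc]; push_cast; ring
    rw [this, Complex.norm_real, Real.norm_eq_abs, abs_of_pos hcpos]
    nlinarith
  · have hw0 : z - 1 ≠ 0 := by
      intro h
      rw [h] at harg
      simp [Complex.arg_zero] at harg
      linarith
    set a := z.re with ha
    set b := z.im with hb
    set ρ := ‖z - 1‖ with hρ
    have hρ0 : 0 ≤ ρ := norm_nonneg _
    have hre : ρ * Real.cos (z-1).arg = a - 1 := by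
      rw [hρ]
      have := Complex.norm_mul_cos_arg (z - 1)
      rw [this]; simp [ha]
    have hcosle : Real.cos (z-1).arg ≤ Real.cos α := by
      rw [← Real.cos_abs]
      exact Real.cos_le_cos_of_nonneg_of_le_pi hα0.le (Complex.abs_arg_le_pi _) harg
    have hrele : a - 1 ≤ ρ * Real.cos α := by
      rw [← hre]
      exact mul_le_mul_of_nonneg_left hcosle hρ0
    have hρsq : ρ^2 = (a-1)^2 + b^2 := by
      rw [hρ, Complex.sq_norm, Complex.normSq_apply]
      simp [ha, hb]
      ring
    have hnsq : Complex.normSq ((m:ℂ) - z) = (m - a)^2 + b^2 := by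
      rw [Complex.normSq_apply]
      simp [ha, hb]
      ring
    have hkey : 1 < Complex.normSq ((m:ℂ) - z) := by
      rw [hnsq]
      have h5 : 1 < (c * Real.sin α)^2 := by nlinarith
      have hpyth := Real.sin_sq_add_cos_sq α
      have e2 : (m-a)^2 + b^2 = c^2 - 2*c*(a-1) + ρ^2 := by
        rw [hρsq, hc]; ring
      have e3 : c^2 - 2*c*(a-1) + ρ^2 ≥ c^2 - 2*c*(ρ*Real.cos α) + ρ^2 := by
        nlinarith [hrele, hcpos]
      have e4 : c^2 - 2*c*(ρ*Real.cos α) + ρ^2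
          = (ρ - c*Real.cos α)^2 + (c*Real.sin α)^2 := by
        linear_combination (-(c^2)) * hpyth
      nlinarith [sq_nonneg (ρ - c * Real.cos α)]
    rw [Complex.norm_def]
    rw [show (1:ℝ) = Real.sqrt 1 by simp]
    exact Real.sqrt_lt_sqrt (by norm_num) hkey

lemma one_le_multiset_prod (M : Multiset ℝ) (h : ∀ x ∈ M, 1 ≤ x) : 1 ≤ M.prod := by
  induction M using Multiset.induction_on with
  | empty => simp
  | cons a s ih =>
    rw [Multiset.prod_cons]
    have ha := h a (Multiset.mem_cons_self a s)
    have hs := ih (fun x hx => h x (Multiset.mem_cons_of_mem hx))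
    nlinarith

lemma eval_abs_gt (g : Polynomial ℤ) (hg : 0 < g.natDegree) (m : ℤ)
    (hroots : ∀ z ∈ (g.map (Int.castRingHom ℂ)).roots, 1 < ‖(m:ℂ) - z‖) :
    1 < |g.eval m| := by
  have hg0 : g ≠ 0 := fun h => by simp [h] at hg
  set G := g.map (Int.castRingHom ℂ) with hG
  have hG0 : G ≠ 0 := by
    rw [hG, Ne, Polynomial.map_eq_zero_iff Int.cast_injective]
    exact hg0
  have hGdeg : G.natDegree = g.natDegree := by
    rw [hG, Polynomial.natDegree_map_eq_of_injective Int.cast_injective]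
  have hsplits : G.Splits := IsAlgClosed.splits G
  have heval : G.eval (m:ℂ) = G.leadingCoeff * (G.roots.map fun a => (m:ℂ) - a).prod :=
    hsplits.eval_eq_prod_roots _
  have hcard : G.roots.card = g.natDegree := by
    rw [← hGdeg]
    exact (Polynomial.splits_iff_card_roots.mp hsplits)
  obtain ⟨z₀, hz₀⟩ := Multiset.card_pos_iff_exists_mem.mp (by omega : 0 < G.roots.card)
  set M : Multiset ℝ := G.roots.map (fun z => ‖(m:ℂ) - z‖) with hM
  have hall : ∀ x ∈ M, (1:ℝ) ≤ x := by
    intro x hx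
    obtain ⟨z, hz, rfl⟩ := Multiset.mem_map.mp hx
    exact (hroots z hz).le
  have hmem : ‖(m:ℂ) - z₀‖ ∈ M := by
    rw [hM]; exact Multiset.mem_map_of_mem _ hz₀
  have hprod : 1 < M.prod := by
    obtain ⟨M', hM'⟩ := Multiset.exists_cons_of_mem hmem
    rw [hM', Multiset.prod_cons]
    have h1 := hroots z₀ hz₀
    have h2 : 1 ≤ M'.prod := one_le_multiset_prod M' (fun x hx => hall x (by rw [hM']; exact Multiset.mem_cons_of_mem hx))
    nlinarith
  have habseval : ‖G.eval (m:ℂ)‖ = ‖G.leadingCoeff‖ * M.prod := by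
    rw [heval, norm_mul]
    congr 1
    rw [hM]
    exact (Multiset.prod_hom' G.roots (normHom : ℂ →*₀ ℝ) (fun a => (m:ℂ) - a)).symm
  have hlead : 1 ≤ ‖G.leadingCoeff‖ := by
    have : G.leadingCoeff = ((g.leadingCoeff : ℤ) : ℂ) := by
      rw [hG, Polynomial.leadingCoeff_map_of_leadingCoeff_ne_zero]
      · rfl
      · simp only [eq_intCast, Ne, Int.cast_eq_zero]
        exact Polynomial.leadingCoeff_ne_zero.mpr hg0
    rw [this, Complex.norm_intCast]
    have hl0 : g.leadingCoeff ≠ 0 := Polynomial.leadingCoeff_ne_zero.mpr hg0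
    have : (1:ℤ) ≤ |g.leadingCoeff| := Int.one_le_abs (by exact_mod_cast hl0)
    exact_mod_cast this
  have hGm : G.eval (m:ℂ) = ((g.eval m : ℤ) : ℂ) := by
    rw [hG]
    exact_mod_cast Polynomial.eval_intCast_map (Int.castRingHom ℂ) g m
  have hfinal : (1:ℝ) < |(g.eval m : ℤ)| := by
    have h1 : ‖G.eval (m:ℂ)‖ = ((|g.eval m| : ℤ) : ℝ) := by
      rw [hGm, Complex.norm_intCast]
      push_cast
      ring
    have h2 : (1:ℝ) < ‖G.eval (m:ℂ)‖ := by
      rw [habseval]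
      calc (1:ℝ) < M.prod := hprod
        _ ≤ ‖G.leadingCoeff‖ * M.prod :=
          le_mul_of_one_le_left (by linarith) hlead
    rw [h1] at h2
    exact_mod_cast h2
  exact_mod_cast hfinal

lemma int_p_dvd (p : ℕ) (hp : p.Prime) (k : ℕ) (r : ℤ) (hr : r ∣ (p:ℤ)^k)
    (hu : ¬ IsUnit r) : (p:ℤ) ∣ r := by
  have h1 : r.natAbs ∣ p^k := by
    have h2 := Int.natAbs_dvd_natAbs.mpr hr
    have h3 : ((p:ℤ)^k).natAbs = p^k := by
      rw [Int.natAbs_pow]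
      simp
    rwa [h3] at h2
  obtain ⟨j, hj, hje⟩ := (Nat.dvd_prime_pow hp).mp h1
  have hj0 : j ≠ 0 := by
    intro h
    rw [h, pow_zero] at hje
    exact hu (Int.isUnit_iff_natAbs_eq.mpr hje)
  have hpdvd : p ∣ r.natAbs := by
    rw [hje]
    exact dvd_pow_self p hj0
  calc (p:ℤ) ∣ (r.natAbs : ℤ) := Int.natCast_dvd_natCast.mpr hpdvd
    _ ∣ r := Int.natAbs_dvd.mpr dvd_rfl

theorem stmt_18 (n : ℕ) (hn : 2 ≤ n) (f : Polynomial ℤ) (hdeg : f.natDegree = n)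
    (hsum : ∀ j ≤ n, 0 ≤ ∑ i ∈ Finset.range (j + 1), f.coeff (n - i))
    (m : ℤ) (hm : 1 + 1 / Real.sin (Real.pi / n) < (m : ℝ))
    (p : ℕ) (hp : p.Prime) (k : ℕ) (hk : 0 < k)
    (hfm : f.eval m = (p : ℤ) ^ k)
    (hder : ¬ (p : ℤ) ∣ f.derivative.eval m) :
    Irreducible (f.map (Int.castRingHom ℚ)) := by
  have hf0 : f ≠ 0 := by
    intro h; rw [h] at hdeg; simp at hdeg; omega
  have hF0 : f.map (Int.castRingHom ℂ) ≠ 0 := by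
    rw [Ne, Polynomial.map_eq_zero_iff Int.cast_injective]; exact hf0
  -- all roots of f over ℂ are far from m
  have hroots : ∀ z ∈ (f.map (Int.castRingHom ℂ)).roots, 1 < ‖((m:ℤ):ℂ) - z‖ := by
    intro z hz
    have heval : (f.map (Int.castRingHom ℂ)).eval z = 0 :=
      (Polynomial.mem_roots hF0).mp hz
    have hcase : z = 1 ∨ Real.pi/n ≤ |(z-1).arg| := by
      by_cases h1 : z = 1
      · exact Or.inl h1
      · exact Or.inr (no_sector_root n hn f hdeg hsum z heval h1)
    have := root_dist n hn ((m:ℤ):ℝ) hm z hcase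
    have hcast : ((((m:ℤ):ℝ)):ℂ) = (((m:ℤ)):ℂ) := by push_cast; ring
    rwa [hcast] at this
  -- divisor-not-unit implies p divides value
  have hval : ∀ r : ℤ, r ∣ f.eval m → r ∣ f.derivative.eval m → IsUnit r := by
    intro r h1 h2
    by_contra hu
    exact hder (dvd_trans (int_p_dvd p hp k r (hfm ▸ h1) hu) h2)
  have hprim : f.IsPrimitive := by
    intro r hr
    obtain ⟨q, hq⟩ := hr
    apply hval r
    · exact ⟨q.eval m, by rw [hq]; simp⟩
    · refine ⟨q.derivative.eval m, ?_⟩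
      rw [hq, Polynomial.derivative_C_mul]  -- name?
      simp
  -- factor of positive degree has |eval| > 1
  have hfac : ∀ g : Polynomial ℤ, g ∣ f → 0 < g.natDegree → 1 < |g.eval m| := by
    intro g hgf hgd
    apply eval_abs_gt g hgd m
    intro z hz
    apply hroots
    have hdvd : g.map (Int.castRingHom ℂ) ∣ f.map (Int.castRingHom ℂ) :=
      Polynomial.map_dvd _ hgf
    exact Multiset.mem_of_le (Polynomial.roots.le_of_dvd hF0 hdvd) hz
  have hirr : Irreducible f := by
    constructor
    · intro hu
      have := Polynomial.natDegree_eq_zero_of_isUnit hu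
      omega
    · intro g h hfgh
      by_contra hcon
      push_neg at hcon
      obtain ⟨hgu, hhu⟩ := hcon
      have hg0 : g ≠ 0 := by rintro rfl; rw [zero_mul] at hfgh; exact hf0 hfgh
      have hh0 : h ≠ 0 := by rintro rfl; rw [mul_zero] at hfgh; exact hf0 hfgh
      have hdegadd : g.natDegree + h.natDegree = n := by
        rw [← hdeg, hfgh, Polynomial.natDegree_mul hg0 hh0]
      -- constant cases
      rcases Nat.eq_zero_or_pos g.natDegree with hgd | hgd
      · apply hgu
        have hgc : g = Polynomial.C (g.coeff 0) := Polynomial.eq_C_of_natDegree_eq_zero hgd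
        have : IsUnit (g.coeff 0) := by
          apply hval
          · exact ⟨h.eval m, by rw [hfgh, hgc]; simp⟩
          · refine ⟨h.derivative.eval m, ?_⟩
            rw [hfgh, hgc]
            simp
        rw [hgc]
        exact Polynomial.isUnit_C.mpr this
      rcases Nat.eq_zero_or_pos h.natDegree with hhd | hhd
      · apply hhu
        have hhc : h = Polynomial.C (h.coeff 0) := Polynomial.eq_C_of_natDegree_eq_zero hhd
        have : IsUnit (h.coeff 0) := by
          apply hval
          · exact ⟨g.eval m, by rw [hfgh, hhc]; simp; ring⟩
          · refine ⟨g.derivative.eval m, ?_⟩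
            rw [hfgh, hhc]
            simp
            ring
        rw [hhc]
        exact Polynomial.isUnit_C.mpr this
      -- both positive degree
      have hgeval : 1 < |g.eval m| := hfac g ⟨h, hfgh⟩ hgd
      have hheval : 1 < |h.eval m| := hfac h ⟨g, by rw [hfgh]; ring⟩ hhd
      have hmul : g.eval m * h.eval m = (p:ℤ)^k := by
        rw [← hfm, hfgh, Polynomial.eval_mul]
      have hpg : (p:ℤ) ∣ g.eval m := by
        apply int_p_dvd p hp k _ ⟨h.eval m, hmul.symm⟩
        intro hu
        rw [Int.isUnit_iff] at hu
        rcases hu with h' | h' <;> rw [h'] at hgeval <;> simp at hgeval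
      have hph : (p:ℤ) ∣ h.eval m := by
        apply int_p_dvd p hp k _ ⟨g.eval m, by rw [← hmul]; ring⟩
        intro hu
        rw [Int.isUnit_iff] at hu
        rcases hu with h' | h' <;> rw [h'] at hheval <;> simp at hheval
      apply hder
      rw [hfgh, Polynomial.derivative_mul, Polynomial.eval_add, Polynomial.eval_mul,
        Polynomial.eval_mul]
      exact dvd_add (Dvd.dvd.mul_left hph _) (Dvd.dvd.mul_right hpg _)
  exact (Polynomial.IsPrimitive.Int.irreducible_iff_irreducible_map_cast hprim).mp hirr
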